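/- Let A ∈ ℝ^{n×n} be symmetric with eigenvalues in (0,2) and b ∈ ℝ^n, with f(x) = -(Ax - b) and g(x) = x + f(x). For any x̄, ȳ ∈ ℝ^n and any β ∈ ℝ, define x⁰ = x̄ + β(ȳ - x̄) and x¹ = g(x̄) + β(g(ȳ) - g(x̄)). If f(x⁰) ≠ 0, then ‖f(x¹)‖₂ < ‖f(x⁰)‖₂. -/

import Mathlib

open Matrix

noncomputable def enorm {n : ℕ} (v : Fin n → ℝ) : ℝ := Real.sqrt (v ⬝ᵥ v)

theorem stmt_9 {n : ℕ} (A : Matrix (Fin n) (Fin n) ℝ) (hA : A.IsHermitian)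
    (hev : ∀ i, hA.eigenvalues i ∈ Set.Ioo (0:ℝ) 2)
    (b : Fin n → ℝ)
    (f g : (Fin n → ℝ) → (Fin n → ℝ))
    (hf : ∀ x, f x = -(A.mulVec x - b))
    (hg : ∀ x, g x = x + f x)
    (xb yb : Fin n → ℝ) (β : ℝ)
    (x0 x1 : Fin n → ℝ)
    (hx0 : x0 = xb + β • (yb - xb))
    (hx1 : x1 = g xb + β • (g yb - g xb))
    (hne : f x0 ≠ 0) :
    _root_.enorm (f x1) < _root_.enorm (f x0) := by
  set w := f x0 with hw
  -- x1 = x0 + w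
  have hx1' : x1 = x0 + w := by
    have hfx0 : w = f xb + β • (f yb - f xb) := by
      rw [hw, hf, hf, hf, hx0]
      funext i
      simp [Matrix.mulVec_add, Matrix.mulVec_smul, Matrix.mulVec_sub]
      ring
    rw [hx1, hg, hg, hx0, hfx0]
    module
  -- f x1 = w - A *ᵥ w
  have hfx1 : f x1 = w - A.mulVec w := by
    rw [hf, hx1', Matrix.mulVec_add]
    rw [hw, hf x0]
    funext i
    simp [Matrix.mulVec_add]
    ring
  rw [hfx1]
  -- spectral setup
  set B := hA.eigenvectorBasis with hB
  set μ := hA.eigenvalues with hμ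
  set c : Fin n → ℝ := fun i => (⇑(B i)) ⬝ᵥ w with hc
  have hAB : ∀ i, A *ᵥ ⇑(B i) = μ i • ⇑(B i) := fun i => hA.mulVec_eigenvectorBasis i
  have hAsymm : Aᵀ = A := hA
  -- key dot product computations via Parseval
  have hParseval : ∀ v : Fin n → ℝ, v ⬝ᵥ v = ∑ i, ((⇑(B i)) ⬝ᵥ v) ^ 2 := by
    intro v
    have := B.sum_inner_mul_inner ((WithLp.equiv 2 (Fin n → ℝ)).symm v)
      ((WithLp.equiv 2 (Fin n → ℝ)).symm v)
    rw [show inner ℝ ((WithLp.equiv 2 (Fin n → ℝ)).symm v) ((WithLp.equiv 2 (Fin n → ℝ)).symm v) = v ⬝ᵥ star v from rfl] at this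
    simp only [star_trivial] at this
    rw [← this]
    apply Finset.sum_congr rfl
    intro i _
    have h1 : (inner ℝ ((WithLp.equiv 2 (Fin n → ℝ)).symm v) (B i) : ℝ)
        = v ⬝ᵥ ⇑(B i) := by rw [EuclideanSpace.inner_eq_star_dotProduct, dotProduct_comm]; rfl
    have h2 : (inner ℝ (B i) ((WithLp.equiv 2 (Fin n → ℝ)).symm v) : ℝ)
        = (⇑(B i)) ⬝ᵥ v := by rw [EuclideanSpace.inner_eq_star_dotProduct, dotProduct_comm]; rfl
    rw [h1, h2, dotProduct_comm v]
    ring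
  have hBw : ∀ i, (⇑(B i)) ⬝ᵥ (w - A *ᵥ w) = (1 - μ i) * c i := by
    intro i
    have : (⇑(B i)) ⬝ᵥ (A *ᵥ w) = μ i * c i := by
      rw [Matrix.dotProduct_mulVec, ← Matrix.mulVec_transpose, hAsymm, hAB i,
        smul_dotProduct]
      rfl
    rw [dotProduct_sub, this, hc]
    ring
  have h1 : (w - A *ᵥ w) ⬝ᵥ (w - A *ᵥ w) = ∑ i, ((1 - μ i) * c i) ^ 2 := by
    rw [hParseval]
    exact Finset.sum_congr rfl fun i _ => by rw [hBw i]
  have h2 : w ⬝ᵥ w = ∑ i, (c i) ^ 2 := hParseval w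
  -- some coefficient is nonzero
  have hex : ∃ i, c i ≠ 0 := by
    by_contra h
    push_neg at h
    apply hne
    have hW : (WithLp.equiv 2 (Fin n → ℝ)).symm w = 0 := by
      have := B.sum_repr ((WithLp.equiv 2 (Fin n → ℝ)).symm w)
      rw [← this]
      apply Finset.sum_eq_zero
      intro i _
      have : B.repr ((WithLp.equiv 2 (Fin n → ℝ)).symm w) i = c i := by
        rw [B.repr_apply_apply]
        rw [EuclideanSpace.inner_eq_star_dotProduct, dotProduct_comm]; rfl
      rw [this, h i, zero_smul]
    have : w = (WithLp.equiv 2 (Fin n → ℝ)) ((WithLp.equiv 2 (Fin n → ℝ)).symm w) := rfl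
    rw [this, hW]
    rfl
  obtain ⟨i₀, hi₀⟩ := hex
  -- strict sum inequality
  have hsum : ∑ i, ((1 - μ i) * c i) ^ 2 < ∑ i, (c i) ^ 2 := by
    apply Finset.sum_lt_sum
    · intro i _
      obtain ⟨h0, h2'⟩ := hev i
      have hkey : ((1 - μ i) * c i) ^ 2 = c i ^ 2 - (μ i * (2 - μ i)) * c i ^ 2 := by ring
      have hpos : 0 ≤ (μ i * (2 - μ i)) * c i ^ 2 :=
        mul_nonneg (mul_nonneg h0.le (by linarith)) (sq_nonneg _)
      linarith
    · refine ⟨i₀, Finset.mem_univ _, ?_⟩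
      obtain ⟨h0, h2'⟩ := hev i₀
      have hc2 : 0 < (c i₀) ^ 2 := by positivity
      have hkey : ((1 - μ i₀) * c i₀) ^ 2 = c i₀ ^ 2 - (μ i₀ * (2 - μ i₀)) * c i₀ ^ 2 := by ring
      have hpos : 0 < (μ i₀ * (2 - μ i₀)) * c i₀ ^ 2 :=
        mul_pos (mul_pos h0 (by linarith)) hc2
      linarith
  unfold _root_.enorm
  apply Real.sqrt_lt_sqrt
  · rw [h1]
    positivity
  · rw [h1, h2]; exact hsum
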